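/- The group SL(n, ℤ) has the bounded depth roots property: for every infinite-order matrix A ∈ SL(n, ℤ) there is an integer p such that no B ∈ SL(n, ℤ) satisfies Bᵏ = A with k ≥ p. -/

import Mathlib

open Polynomial

/-- Evaluating the characteristic polynomial gives a determinant. -/
private lemma eval_charpoly_eq {n : ℕ} (M : Matrix (Fin n) (Fin n) ℂ) (μ : ℂ) :
    M.charpoly.eval μ = (Matrix.scalar (Fin n) μ - M).det := by
  rw [Matrix.charpoly, _root_.eval_det, Matrix.matPolyEquiv_charmatrix]
  rw [eval_sub, eval_X, eval_C]

private lemma algebraMap_eq_scalar {n : ℕ} (μ : ℂ) :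
    (algebraMap ℂ (Matrix (Fin n) (Fin n) ℂ)) μ = Matrix.scalar (Fin n) μ := by
  rw [Matrix.algebraMap_eq_diagonal, Matrix.scalar_apply]
  simp

private lemma isRoot_charpoly_iff {n : ℕ} (M : Matrix (Fin n) (Fin n) ℂ) (μ : ℂ) :
    M.charpoly.IsRoot μ ↔ (M - Matrix.scalar (Fin n) μ).det = 0 := by
  have h : Matrix.scalar (Fin n) μ - M = -(M - Matrix.scalar (Fin n) μ) := (neg_sub _ _).symm
  rw [IsRoot, eval_charpoly_eq, h, Matrix.det_neg]
  constructor
  · intro h0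
    rcases mul_eq_zero.mp h0 with h1 | h1
    · exact absurd h1 (pow_ne_zero _ (by norm_num))
    · exact h1
  · intro h0; rw [h0, mul_zero]

/-- Spectral mapping for powers, phrased via characteristic polynomials. -/
private lemma charpoly_pow_isRoot_iff {n : ℕ} (M : Matrix (Fin n) (Fin n) ℂ) {k : ℕ}
    (hk : 0 < k) (η : ℂ) :
    (M ^ k).charpoly.IsRoot η ↔ ∃ μ, M.charpoly.IsRoot μ ∧ μ ^ k = η := by
  have hq : (X ^ k - C η : ℂ[X]).Monic := monic_X_pow_sub_C η hk.ne'
  have hq0 : (X ^ k - C η : ℂ[X]) ≠ 0 := hq.ne_zero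
  have hmemroots : ∀ r : ℂ, r ∈ (X ^ k - C η : ℂ[X]).roots ↔ r ^ k = η := by
    intro r
    rw [mem_roots hq0, IsRoot, eval_sub, eval_pow, eval_X, eval_C, sub_eq_zero]
  set L : List ℂ := (X ^ k - C η : ℂ[X]).roots.toList with hLdef
  have hmemL : ∀ r : ℂ, r ∈ L ↔ r ^ k = η := by
    intro r
    rw [hLdef, Multiset.mem_toList, hmemroots]
  have hfact : M ^ k - Matrix.scalar (Fin n) η =
      ((L.map (fun r => M - Matrix.scalar (Fin n) r)).prod) := by
    have hsplit := (IsAlgClosed.splits _).eq_prod_roots_of_monic hq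
    have hsplit2 : (X ^ k - C η : ℂ[X]) = (L.map (fun a => X - C a)).prod := by
      rw [hLdef]
      rw [← Multiset.coe_toList (X ^ k - C η : ℂ[X]).roots] at hsplit
      rw [Multiset.map_coe, Multiset.prod_coe] at hsplit
      exact hsplit
    have h2 := congrArg (Polynomial.aeval M) hsplit2
    rw [map_sub, map_pow, aeval_X, aeval_C, algebraMap_eq_scalar] at h2
    rw [h2, map_list_prod, List.map_map]
    congr 1
    apply List.map_congr_left
    intro r _
    simp [Function.comp, algebraMap_eq_scalar]
  have hdet : (M ^ k - Matrix.scalar (Fin n) η).det =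
      ((L.map (fun r => (M - Matrix.scalar (Fin n) r).det)).prod) := by
    rw [hfact]
    have h3 := map_list_prod (Matrix.detMonoidHom (n := Fin n) (R := ℂ))
      (L.map (fun r => M - Matrix.scalar (Fin n) r))
    simp only [Matrix.coe_detMonoidHom] at h3
    rw [h3, List.map_map]
    rfl
  rw [isRoot_charpoly_iff, hdet, List.prod_eq_zero_iff]
  constructor
  · intro h0
    rw [List.mem_map] at h0
    obtain ⟨r, hr, hr0⟩ := h0
    exact ⟨r, (isRoot_charpoly_iff M r).mpr hr0, (hmemL r).mp hr⟩
  · rintro ⟨μ, hμ, rfl⟩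
    rw [List.mem_map]
    exact ⟨μ, (hmemL μ).mpr rfl, (isRoot_charpoly_iff M μ).mp hμ⟩

private lemma charpoly_eq_pow_of_roots_one {n : ℕ} (M : Matrix (Fin n) (Fin n) ℂ)
    (h : ∀ z ∈ M.charpoly.roots, z = 1) : M.charpoly = (X - C 1) ^ n := by
  have hm := M.charpoly_monic
  have hs : Splits M.charpoly := IsAlgClosed.splits _
  have hcard : Multiset.card M.charpoly.roots = n := by
    rw [splits_iff_card_roots.mp hs, Matrix.charpoly_natDegree_eq_dim, Fintype.card_fin]
  have hrep : M.charpoly.roots = Multiset.replicate n 1 :=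
    Multiset.eq_replicate.mpr ⟨hcard, h⟩
  rw [hs.eq_prod_roots_of_monic hm, hrep, Multiset.map_replicate,
    Multiset.prod_replicate]

private lemma sub_one_pow_eq_zero {n : ℕ} (M : Matrix (Fin n) (Fin n) ℤ)
    (h : ∀ z ∈ ((M.map ⇑(Int.castRingHom ℂ)).charpoly).roots, z = 1) : (M - 1) ^ n = 0 := by
  have h1 : M.charpoly.map (Int.castRingHom ℂ) = ((X - C 1) ^ n : ℂ[X]) := by
    rw [← Matrix.charpoly_map M (Int.castRingHom ℂ)]
    exact charpoly_eq_pow_of_roots_one _ h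
  have h2 : M.charpoly = (X - C 1) ^ n := by
    apply Polynomial.map_injective (Int.castRingHom ℂ) Int.cast_injective
    rw [h1]
    simp [Polynomial.map_pow, Polynomial.map_sub]
  have h3 := Matrix.aeval_self_charpoly M
  rw [h2] at h3
  rw [C_1, map_pow, map_sub, aeval_X, map_one] at h3
  exact h3

/-- Bounding the order of a root of a non-identity unipotent element. -/
private lemma unipotent_root_bound {n : ℕ} {U V : Matrix (Fin n) (Fin n) ℤ} {k : ℕ}
    (hk : 0 < k) (hU : (U - 1) ^ n = 0) (hV : (V - 1) ^ n = 0) (hUne : U ≠ 1)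
    (hpow : V ^ k = U) :
    ∃ t, 1 ≤ t ∧ t ≤ n ∧ ∃ i j, (k : ℤ) ≤ |((U - 1) ^ t) i j| := by
  classical
  set Y := V - 1 with hYdef
  have hn : 1 ≤ n := by
    rcases Nat.eq_zero_or_pos n with h0 | h; swap; · exact h
    exfalso; apply hUne; subst h0; ext i; exact i.elim0
  have hYne : Y ≠ 0 := by
    intro h0
    have hV1 : V = 1 := by rwa [hYdef, sub_eq_zero] at h0
    exact hUne (by rw [← hpow, hV1, one_pow])
  set P : ℕ → Prop := fun t => Y ^ t ≠ 0 with hP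
  have hP1 : P 1 := by simpa [hP] using hYne
  set t := Nat.findGreatest P n with htdef
  have ht1 : 1 ≤ t := Nat.le_findGreatest hn hP1
  have htn : t ≤ n := Nat.findGreatest_le n
  have htY : Y ^ t ≠ 0 := Nat.findGreatest_spec hn hP1
  have htY1 : Y ^ (t + 1) = 0 := by
    rcases eq_or_lt_of_le htn with heq | hlt
    · rw [heq, pow_succ, hV, zero_mul]
    · by_contra hne
      exact (Nat.findGreatest_is_greatest (lt_add_one t) hlt) hne
  set q : Polynomial ℤ := (X + 1) ^ k - 1 with hqdef
  have haq : Polynomial.aeval Y q = U - 1 := by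
    rw [hqdef, map_sub, map_pow, map_add, aeval_X, map_one]
    rw [hYdef, sub_add_cancel, hpow]
  have hc0 : q.coeff 0 = 0 := by
    simp [hqdef, coeff_sub, coeff_X_add_one_pow, coeff_one]
  have hc1 : q.coeff 1 = (k : ℤ) := by
    simp [hqdef, coeff_sub, coeff_X_add_one_pow, coeff_one]
  obtain ⟨r, hr⟩ : ∃ r, q = X * (X * r + C (k : ℤ)) := by
    refine ⟨q.divX.divX, ?_⟩
    conv_lhs => rw [← X_mul_divX_add q]
    rw [hc0, map_zero, add_zero]
    congr 1
    conv_lhs => rw [← X_mul_divX_add q.divX]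
    rw [Polynomial.coeff_divX, hc1]
  have hpow2 : ∀ (s : Polynomial ℤ) (c : ℤ) (m : ℕ),
      ∃ g, (X * s + C c) ^ m = X * g + C (c ^ m) := by
    intro s c m
    induction m with
    | zero => exact ⟨0, by simp⟩
    | succ m ih =>
      obtain ⟨g, hg⟩ := ih
      refine ⟨g * (X * s + C c) + C (c ^ m) * s, ?_⟩
      rw [pow_succ, hg, pow_succ, C_mul]
      ring
  obtain ⟨g, hg⟩ := hpow2 r (k : ℤ) t
  have hqt : q ^ t = X ^ t * (X * g + C ((k : ℤ) ^ t)) := by rw [hr, mul_pow, hg]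
  have key : (U - 1) ^ t = ((k : ℤ) ^ t) • Y ^ t := by
    have h2 := congrArg (Polynomial.aeval Y) hqt
    rw [map_pow, haq] at h2
    rw [h2, map_mul, map_pow, aeval_X, map_add, map_mul, aeval_X, aeval_C]
    rw [mul_add]
    have h3 : Y ^ t * (Y * (Polynomial.aeval Y) g) = 0 := by
      rw [← mul_assoc, ← pow_succ, htY1, zero_mul]
    rw [h3, zero_add, Algebra.algebraMap_eq_smul_one, mul_smul_comm, mul_one]
  obtain ⟨i, j, hij⟩ : ∃ i j, (Y ^ t) i j ≠ 0 := by
    by_contra hcon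
    push_neg at hcon
    exact htY (by ext i j; exact hcon i j)
  refine ⟨t, ht1, htn, i, j, ?_⟩
  have hent : ((U - 1) ^ t) i j = (k : ℤ) ^ t * ((Y ^ t) i j) := by
    rw [key, Matrix.smul_apply, smul_eq_mul]
  rw [hent, abs_mul]
  have h1 : (1 : ℤ) ≤ |(Y ^ t) i j| := Int.one_le_abs hij
  have h2 : (k : ℤ) ≤ |(k : ℤ) ^ t| := by
    rw [abs_of_nonneg (by positivity)]
    calc (k : ℤ) = (k : ℤ) ^ 1 := (pow_one _).symm
    _ ≤ (k : ℤ) ^ t := pow_le_pow_right₀ (by exact_mod_cast hk) ht1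
  calc (k : ℤ) ≤ |(k : ℤ) ^ t| := h2
  _ = |(k : ℤ) ^ t| * 1 := (mul_one _).symm
  _ ≤ |(k : ℤ) ^ t| * |(Y ^ t) i j| := by
      apply mul_le_mul_of_nonneg_left h1 (abs_nonneg _)

private lemma norm_multiset_prod_le_one (m : Multiset ℂ) (h : ∀ z ∈ m, ‖z‖ ≤ 1) :
    ‖m.prod‖ ≤ 1 := by
  induction m using Multiset.induction_on with
  | empty => simp
  | cons a s ih =>
    rw [Multiset.prod_cons, norm_mul]
    have ha : ‖a‖ ≤ 1 := h a (Multiset.mem_cons_self a s)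
    have hs : ‖s.prod‖ ≤ 1 := ih (fun z hz => h z (Multiset.mem_cons_of_mem hz))
    calc ‖a‖ * ‖s.prod‖ ≤ 1 * 1 := by
          apply mul_le_mul ha hs (norm_nonneg _) zero_le_one
    _ = 1 := mul_one 1

open IntermediateField in
/-- Kronecker: a root of a monic integer polynomial all of whose complex roots lie on the
unit circle has finite (multiplicative) order. -/
private lemma finite_order_of_conj_norm_one {q : Polynomial ℤ} (hq : q.Monic)
    (h1 : ∀ z ∈ (q.map (Int.castRingHom ℂ)).roots, ‖z‖ = 1)
    {lam : ℂ} (hlam : lam ∈ (q.map (Int.castRingHom ℂ)).roots) : IsOfFinOrder lam := by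
  have hq0 : q.map (Int.castRingHom ℂ) ≠ 0 := (hq.map _).ne_zero
  have hroot : Polynomial.aeval lam q = 0 := by
    have h2 := (Polynomial.mem_roots'.mp hlam).2
    rw [Polynomial.IsRoot, Polynomial.eval_map] at h2
    rw [Polynomial.aeval_def, algebraMap_int_eq]
    exact h2
  have hint : IsIntegral ℤ lam := ⟨q, hq, hroot⟩
  have hintQ : IsIntegral ℚ lam := hint.tower_top
  haveI : FiniteDimensional ℚ ℚ⟮lam⟯ := IntermediateField.adjoin.finiteDimensional hintQ
  haveI : NumberField ℚ⟮lam⟯ := ⟨⟩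
  set x : ℚ⟮lam⟯ := IntermediateField.AdjoinSimple.gen ℚ lam with hxdef
  have hx : algebraMap ℚ⟮lam⟯ ℂ x = lam := IntermediateField.AdjoinSimple.algebraMap_gen ℚ lam
  have hxi : IsIntegral ℤ x := by
    have h4 : IsIntegral ℤ ((algebraMap ℚ⟮lam⟯ ℂ) x) := by rwa [hx]
    exact (isIntegral_algebraMap_iff (R := ℤ) (A := ℚ⟮lam⟯) (B := ℂ)
      (algebraMap ℚ⟮lam⟯ ℂ).injective).mp h4
  have hnorm : ∀ φ : ℚ⟮lam⟯ →+* ℂ, ‖φ x‖ = 1 := by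
    intro φ
    have hmem2 : φ x ∈ (minpoly ℚ x).rootSet ℂ := by
      rw [← NumberField.Embeddings.range_eval_eq_rootSet_minpoly ℚ⟮lam⟯ ℂ x]
      exact ⟨φ, rfl⟩
    have hmineq : minpoly ℚ lam = minpoly ℚ x := by
      have h4 := minpoly.algebraMap_eq (A := ℚ) (algebraMap ℚ⟮lam⟯ ℂ).injective x
      rwa [hx] at h4
    have haev : Polynomial.aeval (φ x) (minpoly ℚ lam) = 0 := by
      rw [hmineq]
      exact (Polynomial.mem_rootSet.mp hmem2).2
    have hdvd : minpoly ℚ lam ∣ q.map (Int.castRingHom ℚ) := by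
      apply minpoly.dvd ℚ lam
      rw [show (Int.castRingHom ℚ) = algebraMap ℤ ℚ from rfl,
        Polynomial.aeval_map_algebraMap]
      exact hroot
    have haev2 : Polynomial.aeval (φ x) (q.map (Int.castRingHom ℚ)) = 0 :=
      aeval_eq_zero_of_dvd_aeval_eq_zero hdvd haev
    have hroot2 : φ x ∈ (q.map (Int.castRingHom ℂ)).roots := by
      have hcomp : q.map (Int.castRingHom ℂ) = (q.map (Int.castRingHom ℚ)).map (algebraMap ℚ ℂ) := by
        rw [Polynomial.map_map,
          show (algebraMap ℚ ℂ).comp (Int.castRingHom ℚ) = Int.castRingHom ℂ from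
            RingHom.ext_int _ _]
      rw [Polynomial.mem_roots hq0, Polynomial.IsRoot, hcomp, Polynomial.eval_map]
      all_goals exact haev2
    exact h1 _ hroot2
  obtain ⟨m, hm, hxm⟩ := NumberField.Embeddings.pow_eq_one_of_norm_eq_one ℚ⟮lam⟯ ℂ hxi hnorm
  refine isOfFinOrder_iff_pow_eq_one.mpr ⟨m, hm, ?_⟩
  have h5 := congrArg (algebraMap ℚ⟮lam⟯ ℂ) hxm
  rwa [map_pow, hx, map_one] at h5

set_option maxHeartbeats 1600000 in
/-- `SL(n, ℤ)` has the bounded depth roots property: for every infinite-order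
`A ∈ SL(n, ℤ)` there is an integer `p` such that no `B ∈ SL(n, ℤ)` satisfies
`Bᵏ = A` with `k ≥ p`. -/
theorem SL_n_Z_bounded_depth_roots (n : ℕ)
    (A : Matrix.SpecialLinearGroup (Fin n) ℤ) (hA : ¬IsOfFinOrder A) :
    ∃ p : ℕ, ∀ k : ℕ, p ≤ k →
      ∀ B : Matrix.SpecialLinearGroup (Fin n) ℤ, B ^ k ≠ A := by
  classical
  set fC : ℤ →+* ℂ := Int.castRingHom ℂ with hfC
  set Az : Matrix (Fin n) (Fin n) ℤ := ↑A with hAzdef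
  set Ac : Matrix (Fin n) (Fin n) ℂ := Az.map ⇑fC with hAcdef
  have hmappow : ∀ (M : Matrix (Fin n) (Fin n) ℤ) (m : ℕ),
      (M ^ m).map ⇑fC = (M.map ⇑fC) ^ m := by
    intro M m
    simpa only [RingHom.mapMatrix_apply] using map_pow fC.mapMatrix M m
  -- Bound on the roots of the characteristic polynomial of A
  set Rmax : ℝ := ((Ac.charpoly.roots.map (fun z => ‖z‖)).sum) + 1 with hRdef
  have hR1 : 1 ≤ Rmax := by
    rw [hRdef]
    have : 0 ≤ (Ac.charpoly.roots.map (fun z => ‖z‖)).sum :=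
      Multiset.sum_nonneg (by
        intro x hx
        rw [Multiset.mem_map] at hx
        obtain ⟨z, _, rfl⟩ := hx
        exact norm_nonneg z)
    linarith
  have hRroot : ∀ z ∈ Ac.charpoly.roots, ‖z‖ ≤ Rmax := by
    intro z hz
    have h1 : ‖z‖ ∈ (Ac.charpoly.roots.map (fun z => ‖z‖)) :=
      Multiset.mem_map_of_mem _ hz
    have h2 := Multiset.single_le_sum (by
        intro x hx
        rw [Multiset.mem_map] at hx
        obtain ⟨w, _, rfl⟩ := hx
        exact norm_nonneg w) _ h1
    rw [hRdef]; linarith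
  -- The finite set S of possible eigenvalues of roots of A
  set Cb : ℤ := (Nat.ceil ((Rmax ⊔ 1) ^ n * ((n.choose (n / 2)) : ℝ)) : ℤ) with hCbdef
  have hSfin : Set.Finite (⋃ (f : Polynomial ℤ)
      (_ : f.natDegree ≤ n ∧ ∀ i, f.coeff i ∈ Set.Icc (-Cb) Cb),
      (((f.map fC).roots.toFinset : Finset ℂ) : Set ℂ)) :=
    Polynomial.bUnion_roots_finite fC n (Set.finite_Icc _ _)
  set S : Finset ℂ := hSfin.toFinset with hSdef
  -- membership criterion
  have hmem : ∀ M : Matrix (Fin n) (Fin n) ℤ,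
      (∀ z ∈ ((M.map ⇑fC).charpoly).roots, ‖z‖ ≤ Rmax) →
      ∀ z ∈ ((M.map ⇑fC).charpoly).roots, z ∈ S := by
    intro M hbd z hz
    rw [hSdef, Set.Finite.mem_toFinset, Set.mem_iUnion]
    refine ⟨M.charpoly, ?_⟩
    rw [Set.mem_iUnion]
    have hdeg : M.charpoly.natDegree = n := by
      rw [Matrix.charpoly_natDegree_eq_dim, Fintype.card_fin]
    refine ⟨⟨le_of_eq hdeg, fun i => ?_⟩, ?_⟩
    · have hbd2 : ∀ z ∈ (Polynomial.map fC M.charpoly).roots, ‖z‖ ≤ Rmax := by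
        rw [← Matrix.charpoly_map]; exact hbd
      have := Polynomial.coeff_bdd_of_roots_le fC (M.charpoly_monic)
        (IsAlgClosed.splits _)
        (le_of_eq hdeg) hbd2 i
      rw [Polynomial.coeff_map] at this
      have hnc : ‖fC (M.charpoly.coeff i)‖ = |((M.charpoly.coeff i : ℝ))| := by
        rw [hfC]; exact Complex.norm_intCast _
      rw [hnc] at this
      rw [Set.mem_Icc, ← abs_le]
      have hceil : (Rmax ⊔ 1) ^ n * ((n.choose (n / 2)) : ℝ) ≤ (Cb : ℝ) := by
        rw [hCbdef]
        push_cast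
        exact Nat.le_ceil _
      have : |((M.charpoly.coeff i : ℝ))| ≤ (Cb : ℝ) := le_trans this hceil
      rw [← Int.cast_abs] at this
      exact_mod_cast this
    · rw [Finset.mem_coe, Multiset.mem_toFinset, ← Matrix.charpoly_map]
      exact hz
  -- determinant of Ac is 1
  have hdetAc : Ac.det = 1 := by
    rw [hAcdef, show Az.map ⇑fC = fC.mapMatrix Az from rfl, ← RingHom.map_det]
    rw [show Az.det = 1 from A.prop, map_one]
  by_cases hcase : ∀ z ∈ Ac.charpoly.roots, ‖z‖ = 1
  · -- Case 2: all eigenvalues of A lie on the unit circle (unipotent-type case)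
    set N : ℕ := ∏ s ∈ S, max 1 (orderOf s) with hNdef
    have hN : 0 < N := Finset.prod_pos (fun s _ => lt_of_lt_of_le zero_lt_one (le_max_left _ _))
    have hNpow : ∀ z ∈ S, IsOfFinOrder z → z ^ N = 1 := by
      intro z hz hfin
      rw [← orderOf_dvd_iff_pow_eq_one]
      have h1 : max 1 (orderOf z) = orderOf z := max_eq_right hfin.orderOf_pos
      calc orderOf z = max 1 (orderOf z) := h1.symm
      _ ∣ N := Finset.dvd_prod_of_mem _ hz
    -- A^N is unipotent
    have hArootsN : ∀ η ∈ (((Az ^ N).map ⇑fC).charpoly).roots, η = 1 := by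
      intro η hη
      rw [hmappow] at hη
      obtain ⟨lam, hlroot, hlN⟩ :=
        (charpoly_pow_isRoot_iff Ac hN η).mp (Polynomial.mem_roots'.mp hη).2
      have hlmem : lam ∈ Ac.charpoly.roots :=
        Polynomial.mem_roots'.mpr ⟨(Matrix.charpoly_monic _).ne_zero, hlroot⟩
      have hlS : lam ∈ S := hmem Az (fun z hz => le_trans (le_of_eq (hcase z hz)) hR1) lam hlmem
      have hlfin : IsOfFinOrder lam := by
        apply finite_order_of_conj_norm_one (Matrix.charpoly_monic Az)
          (q := Az.charpoly)
        · intro z hz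
          apply hcase
          rw [hAcdef, Matrix.charpoly_map]
          exact hz
        · rw [← Matrix.charpoly_map]
          exact hlmem
      rw [← hlN]
      exact hNpow lam hlS hlfin
    have hUnil : (Az ^ N - 1) ^ n = 0 := sub_one_pow_eq_zero _ hArootsN
    have hUne : Az ^ N ≠ 1 := by
      intro h1
      apply hA
      refine isOfFinOrder_iff_pow_eq_one.mpr ⟨N, hN, ?_⟩
      have h2 : ((A ^ N : Matrix.SpecialLinearGroup (Fin n) ℤ) : Matrix (Fin n) (Fin n) ℤ)
          = ((1 : Matrix.SpecialLinearGroup (Fin n) ℤ) : Matrix (Fin n) (Fin n) ℤ) := by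
        rw [Matrix.SpecialLinearGroup.coe_pow, Matrix.SpecialLinearGroup.coe_one]
        exact h1
      exact Subtype.coe_injective h2
    -- the bound
    set Cuni : ℕ := (Finset.range (n + 1)).sup (fun t =>
      Finset.univ.sup (fun i : Fin n => Finset.univ.sup (fun j : Fin n =>
        (((Az ^ N - 1) ^ t) i j).natAbs))) with hCuni
    refine ⟨Cuni + 1, fun k hkp B hB => ?_⟩
    have hk : 0 < k := lt_of_lt_of_le (Nat.succ_pos _) hkp
    set Bz : Matrix (Fin n) (Fin n) ℤ := ↑B with hBzdef
    have hBA : Bz ^ k = Az := by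
      rw [hBzdef, hAzdef, ← Matrix.SpecialLinearGroup.coe_pow, hB]
    set Bc : Matrix (Fin n) (Fin n) ℂ := Bz.map ⇑fC with hBcdef
    have hBk : Bc ^ k = Ac := by
      rw [hBcdef, hAcdef, ← hmappow, hBA]
    -- all eigenvalues of B have norm 1
    have hrootsB1 : ∀ z ∈ (Bc.charpoly).roots, ‖z‖ = 1 := by
      intro μ hμ
      have hroot : (Ac.charpoly).IsRoot (μ ^ k) := by
        rw [← hBk]
        exact (charpoly_pow_isRoot_iff Bc hk _).mpr ⟨μ, (Polynomial.mem_roots'.mp hμ).2, rfl⟩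
      have hmemA : μ ^ k ∈ Ac.charpoly.roots :=
        Polynomial.mem_roots'.mpr ⟨(Matrix.charpoly_monic _).ne_zero, hroot⟩
      have h1 := hcase _ hmemA
      rw [norm_pow] at h1
      rcases lt_trichotomy ‖μ‖ 1 with hlt | heq | hgt
      · exfalso
        have := pow_lt_one₀ (norm_nonneg μ) hlt hk.ne'
        rw [h1] at this; exact lt_irrefl _ this
      · exact heq
      · exfalso
        have := one_lt_pow₀ hgt hk.ne'
        rw [h1] at this; exact lt_irrefl _ this
    -- B^N is unipotent
    have hBrootsN : ∀ η ∈ (((Bz ^ N).map ⇑fC).charpoly).roots, η = 1 := by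
      intro η hη
      rw [hmappow] at hη
      obtain ⟨μ, hμroot, hμN⟩ :=
        (charpoly_pow_isRoot_iff Bc hN η).mp (Polynomial.mem_roots'.mp hη).2
      have hμmem : μ ∈ Bc.charpoly.roots :=
        Polynomial.mem_roots'.mpr ⟨(Matrix.charpoly_monic _).ne_zero, hμroot⟩
      have hμS : μ ∈ S := hmem Bz (fun z hz => le_trans (le_of_eq (hrootsB1 z hz)) hR1) μ hμmem
      have hμfin : IsOfFinOrder μ := by
        apply finite_order_of_conj_norm_one (Matrix.charpoly_monic Bz) (q := Bz.charpoly)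
        · intro z hz
          apply hrootsB1
          rw [hBcdef, Matrix.charpoly_map]
          exact hz
        · rw [← Matrix.charpoly_map]
          exact hμmem
      rw [← hμN]
      exact hNpow μ hμS hμfin
    have hVnil : (Bz ^ N - 1) ^ n = 0 := sub_one_pow_eq_zero _ hBrootsN
    have hVU : (Bz ^ N) ^ k = Az ^ N := by
      rw [← pow_mul, mul_comm, pow_mul, hBA]
    obtain ⟨t, ht1, htn, i, j, hineq⟩ := unipotent_root_bound hk hUnil hVnil hUne hVU
    -- contradiction with k ≥ Cuni + 1
    have hle : (((Az ^ N - 1) ^ t) i j).natAbs ≤ Cuni := by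
      rw [hCuni]
      calc (((Az ^ N - 1) ^ t) i j).natAbs
          ≤ Finset.univ.sup (fun j : Fin n => (((Az ^ N - 1) ^ t) i j).natAbs) :=
            Finset.le_sup (f := fun j : Fin n => (((Az ^ N - 1) ^ t) i j).natAbs)
              (Finset.mem_univ j)
      _ ≤ Finset.univ.sup (fun i : Fin n => Finset.univ.sup (fun j : Fin n =>
            (((Az ^ N - 1) ^ t) i j).natAbs)) :=
            Finset.le_sup (f := fun i : Fin n => Finset.univ.sup (fun j : Fin n =>
            (((Az ^ N - 1) ^ t) i j).natAbs)) (Finset.mem_univ i)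
      _ ≤ _ := Finset.le_sup (f := fun t => Finset.univ.sup (fun i : Fin n =>
            Finset.univ.sup (fun j : Fin n => (((Az ^ N - 1) ^ t) i j).natAbs)))
            (Finset.mem_range.mpr (Nat.lt_succ_of_le htn))
    have hkC : (k : ℤ) ≤ (Cuni : ℤ) := by
      calc (k : ℤ) ≤ |((Az ^ N - 1) ^ t) i j| := hineq
      _ = ((((Az ^ N - 1) ^ t) i j).natAbs : ℤ) := (Int.abs_eq_natAbs _)
      _ ≤ (Cuni : ℤ) := by exact_mod_cast hle
    have : k ≤ Cuni := by exact_mod_cast hkC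
    omega
  · -- Case 1: some eigenvalue of A has modulus ≠ 1, hence some has modulus > 1
    have hex : ∃ lam ∈ Ac.charpoly.roots, 1 < ‖lam‖ := by
      push_neg at hcase
      obtain ⟨z₀, hz₀, hz₀ne⟩ := hcase
      by_contra hno
      push_neg at hno
      have hz₀lt : ‖z₀‖ < 1 := lt_of_le_of_ne (hno z₀ hz₀) hz₀ne
      have hprod : Ac.charpoly.roots.prod = 1 := by
        rw [← Matrix.det_eq_prod_roots_charpoly, hdetAc]
      have hcons := Multiset.cons_erase hz₀
      have h1 : (1 : ℝ) = ‖Ac.charpoly.roots.prod‖ := by rw [hprod, norm_one]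
      rw [← hcons, Multiset.prod_cons, norm_mul] at h1
      have hrest : ‖(Ac.charpoly.roots.erase z₀).prod‖ ≤ 1 := by
        apply norm_multiset_prod_le_one
        intro z hz
        exact hno z (Multiset.mem_of_mem_erase hz)
      have : ‖z₀‖ * ‖(Ac.charpoly.roots.erase z₀).prod‖ < 1 := by
        calc ‖z₀‖ * ‖(Ac.charpoly.roots.erase z₀).prod‖ ≤ ‖z₀‖ * 1 := by
              apply mul_le_mul_of_nonneg_left hrest (norm_nonneg _)
        _ = ‖z₀‖ := mul_one _
        _ < 1 := hz₀lt
      linarith [h1]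
    obtain ⟨lam, hlammem, hlam1⟩ := hex
    set T : Finset ℝ := (S.image (fun z => ‖z‖)).filter (fun x => 1 < x) with hTdef
    set p : ℕ := (if hT : T.Nonempty then Nat.ceil ((Rmax - 1) / (T.min' hT - 1)) else 0) + 1
      with hpdef
    refine ⟨p, fun k hkp B hB => ?_⟩
    have hk : 0 < k := by
      have hp1 : 1 ≤ p := by rw [hpdef]; omega
      omega
    set Bz : Matrix (Fin n) (Fin n) ℤ := ↑B with hBzdef
    have hBA : Bz ^ k = Az := by
      rw [hBzdef, hAzdef, ← Matrix.SpecialLinearGroup.coe_pow, hB]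
    set Bc : Matrix (Fin n) (Fin n) ℂ := Bz.map ⇑fC with hBcdef
    have hBk : Bc ^ k = Ac := by
      rw [hBcdef, hAcdef, ← hmappow, hBA]
    -- get an eigenvalue μ of B with μ^k = lam
    have hlroot : (Bc ^ k).charpoly.IsRoot lam := by
      rw [hBk]
      exact (Polynomial.mem_roots'.mp hlammem).2
    obtain ⟨μ, hμroot, hμk⟩ := (charpoly_pow_isRoot_iff Bc hk lam).mp hlroot
    have hμmem : μ ∈ Bc.charpoly.roots :=
      Polynomial.mem_roots'.mpr ⟨(Matrix.charpoly_monic _).ne_zero, hμroot⟩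
    -- bound on eigenvalues of B
    have hboundB : ∀ z ∈ (Bc.charpoly).roots, ‖z‖ ≤ Rmax := by
      intro ν hν
      have hroot : (Ac.charpoly).IsRoot (ν ^ k) := by
        rw [← hBk]
        exact (charpoly_pow_isRoot_iff Bc hk _).mpr ⟨ν, (Polynomial.mem_roots'.mp hν).2, rfl⟩
      have hmemA : ν ^ k ∈ Ac.charpoly.roots :=
        Polynomial.mem_roots'.mpr ⟨(Matrix.charpoly_monic _).ne_zero, hroot⟩
      have h1 := hRroot _ hmemA
      rw [norm_pow] at h1
      rcases le_or_gt ‖ν‖ 1 with hle | hgt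
      · linarith
      · calc ‖ν‖ ≤ ‖ν‖ ^ k := le_self_pow₀ (le_of_lt hgt) hk.ne'
        _ ≤ Rmax := h1
    have hμS : μ ∈ S := hmem Bz hboundB μ hμmem
    have hμgt : 1 < ‖μ‖ := by
      by_contra hle
      push_neg at hle
      have : ‖μ‖ ^ k ≤ 1 := pow_le_one₀ (norm_nonneg _) hle
      rw [← norm_pow, hμk] at this
      linarith
    have hμT : ‖μ‖ ∈ T := by
      rw [hTdef, Finset.mem_filter]
      exact ⟨Finset.mem_image_of_mem _ hμS, hμgt⟩
    have hT : T.Nonempty := ⟨_, hμT⟩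
    have hm₀μ : T.min' hT ≤ ‖μ‖ := Finset.min'_le T _ hμT
    have hm₀1 : 1 < T.min' hT := by
      have h0 := T.min'_mem hT
      exact (Finset.mem_filter.mp h0).2
    have hlamR : ‖lam‖ ≤ Rmax := hRroot _ hlammem
    have hbern : 1 + (k : ℝ) * (T.min' hT - 1) ≤ ‖lam‖ := by
      have h1 : 1 + (k : ℝ) * (T.min' hT - 1) ≤ (1 + (T.min' hT - 1)) ^ k :=
        one_add_mul_le_pow (by linarith) k
      have h2 : (1 + (T.min' hT - 1)) = T.min' hT := by ring
      rw [h2] at h1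
      have h3 : T.min' hT ^ k ≤ ‖μ‖ ^ k := pow_le_pow_left₀ (by linarith) hm₀μ k
      calc 1 + (k : ℝ) * (T.min' hT - 1) ≤ T.min' hT ^ k := h1
      _ ≤ ‖μ‖ ^ k := h3
      _ = ‖lam‖ := by rw [← norm_pow, hμk]
    have hkbig : ((Rmax - 1) / (T.min' hT - 1)) < (k : ℝ) := by
      have h4 : (Rmax - 1) / (T.min' hT - 1) ≤ (Nat.ceil ((Rmax - 1) / (T.min' hT - 1)) : ℝ) :=
        Nat.le_ceil _
      have h5 : p = Nat.ceil ((Rmax - 1) / (T.min' hT - 1)) + 1 := by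
        rw [hpdef, dif_pos hT]
      have h6 : (p : ℝ) ≤ (k : ℝ) := by exact_mod_cast hkp
      rw [h5] at h6
      push_cast at h6
      linarith
    have hfin : Rmax - 1 < (k : ℝ) * (T.min' hT - 1) := by
      rw [div_lt_iff₀ (by linarith : (0 : ℝ) < T.min' hT - 1)] at hkbig
      linarith
    linarith
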